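/- If both nuisance models are misspecified in a compatible way, the doubly robust estimating function admits the error decomposition Ψ(β̄; h, m) = E_S[(h(Z) − h⋆(Z)) X (m(Z) − m⋆(Z))], i.e., the bias at the true parameter is a product of the two nuisance errors. -/

import Mathlib

open MeasureTheory

/-- product-bias decomposition of the doubly robust estimating function at
the true parameter `β̄`: `Ψ(β̄; h, m) = E_S[(h(Z) − h⋆(Z)) X (m(Z) − m⋆(Z))]`. -/
theorem doubly_robust_product_bias {Ω α : Type*} [MeasurableSpace Ω] [MeasurableSpace α]
    (μS μT : Measure Ω) [IsProbabilityMeasure μS] [IsProbabilityMeasure μT]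
    (ν : Measure α) (Z : Ω → α) (Y : Ω → ℝ) (q : ℕ) (x : α → Fin q → ℝ)
    (pS pT : α → ℝ) (g : ℝ → ℝ) (mstar h m hstar : α → ℝ) (βbar : Fin q → ℝ)
    (hZ : Measurable Z) (hY : Measurable Y) (hg : Measurable g)
    (hx : ∀ i, Measurable fun z => x z i)
    (hhme : Measurable h) (hmme : Measurable m) (hmsme : Measurable mstar)
    (hpSme : Measurable pS) (hpTme : Measurable pT)
    (hpS : ∀ z, 0 ≤ pS z) (hpT : ∀ z, 0 ≤ pT z)
    (hpos : ∀ z, 0 < pT z → 0 < pS z)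
    (hstar_def : ∀ z, hstar z = pT z / pS z)
    (hmapS : Measure.map Z μS = ν.withDensity (fun z => ENNReal.ofReal (pS z)))
    (hmapT : Measure.map Z μT = ν.withDensity (fun z => ENNReal.ofReal (pT z)))
    (htowerS : ∀ ψ : α → ℝ, Integrable (fun ω => ψ (Z ω) * Y ω) μS →
      Integrable (fun ω => ψ (Z ω) * mstar (Z ω)) μS →
      ∫ ω, ψ (Z ω) * Y ω ∂μS = ∫ ω, ψ (Z ω) * mstar (Z ω) ∂μS)
    (htowerT : ∀ ψ : α → ℝ, Integrable (fun ω => ψ (Z ω) * Y ω) μT →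
      Integrable (fun ω => ψ (Z ω) * mstar (Z ω)) μT →
      ∫ ω, ψ (Z ω) * Y ω ∂μT = ∫ ω, ψ (Z ω) * mstar (Z ω) ∂μT)
    (hint1 : ∀ i, Integrable (fun ω => h (Z ω) * x (Z ω) i * (m (Z ω) - Y ω)) μS)
    (hint2 : ∀ i, Integrable (fun ω => h (Z ω) * x (Z ω) i * Y ω) μS)
    (hint3 : ∀ i, Integrable (fun ω => h (Z ω) * x (Z ω) i * m (Z ω)) μS)
    (hint4 : ∀ i, Integrable (fun ω => h (Z ω) * x (Z ω) i * mstar (Z ω)) μS)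
    (hint5 : ∀ i, Integrable (fun ω => hstar (Z ω) * x (Z ω) i * m (Z ω)) μS)
    (hint6 : ∀ i, Integrable (fun ω => hstar (Z ω) * x (Z ω) i * mstar (Z ω)) μS)
    (hint7 : ∀ i, Integrable (fun ω => x (Z ω) i * Y ω) μT)
    (hint8 : ∀ i, Integrable (fun ω => x (Z ω) i * m (Z ω)) μT)
    (hint9 : ∀ i, Integrable (fun ω => x (Z ω) i * mstar (Z ω)) μT)
    (hint10 : ∀ i, Integrable (fun ω => x (Z ω) i * g (∑ j, x (Z ω) j * βbar j)) μT)
    -- `β̄` solves the target estimating equation: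
    (hbbar : ∀ i, ∫ ω, x (Z ω) i * (Y ω - g (∑ j, x (Z ω) j * βbar j)) ∂μT = 0) :
    ∀ i, ∫ ω, h (Z ω) * x (Z ω) i * (m (Z ω) - Y ω) ∂μS
        - ∫ ω, x (Z ω) i * (m (Z ω) - g (∑ j, x (Z ω) j * βbar j)) ∂μT
      = ∫ ω, (h (Z ω) - hstar (Z ω)) * x (Z ω) i * (m (Z ω) - mstar (Z ω)) ∂μS := by
  intro i
  have hhstarm : Measurable hstar := by
    have : hstar = fun z => pT z / pS z := funext hstar_def
    rw [this]; exact hpTme.div hpSme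
  set φ : α → ℝ := fun z => x z i * (m z - mstar z) with hφ
  have hφm : Measurable φ := (hx i).mul (hmme.sub hmsme)
  -- key pointwise identity: pS * hstar * φ = pT * φ
  have hkey : ∀ z, pS z * (hstar z * φ z) = pT z * φ z := by
    intro z
    rcases eq_or_lt_of_le (hpS z) with h0 | h0
    · have hpT0 : pT z = 0 := by
        by_contra hc
        have : 0 < pT z := lt_of_le_of_ne (hpT z) (Ne.symm hc)
        exact absurd (hpos z this) (by rw [← h0]; exact lt_irrefl 0)
      rw [← h0, hpT0]; ring
    · rw [hstar_def z]
      field_simp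
  -- transfer: E_T[φ(Z)] = E_S[hstar(Z) φ(Z)]
  have transfer : ∫ ω, φ (Z ω) ∂μT = ∫ ω, hstar (Z ω) * φ (Z ω) ∂μS := by
    have hT : ∫ ω, φ (Z ω) ∂μT = ∫ z, pT z * φ z ∂ν := by
      rw [← integral_map hZ.aemeasurable hφm.aestronglyMeasurable, hmapT]
      have : (fun z => ENNReal.ofReal (pT z)) = fun z => ((pT z).toNNReal : ENNReal) := rfl
      rw [this, integral_withDensity_eq_integral_smul hpTme.real_toNNReal]
      refine integral_congr_ae (Filter.Eventually.of_forall fun z => ?_)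
      simp [NNReal.smul_def, Real.coe_toNNReal _ (hpT z)]
    have hS : ∫ ω, hstar (Z ω) * φ (Z ω) ∂μS = ∫ z, pS z * (hstar z * φ z) ∂ν := by
      rw [← integral_map hZ.aemeasurable (f := fun z => hstar z * φ z) (hhstarm.mul hφm).aestronglyMeasurable, hmapS]
      have : (fun z => ENNReal.ofReal (pS z)) = fun z => ((pS z).toNNReal : ENNReal) := rfl
      rw [this, integral_withDensity_eq_integral_smul hpSme.real_toNNReal]
      refine integral_congr_ae (Filter.Eventually.of_forall fun z => ?_)
      simp [NNReal.smul_def, Real.coe_toNNReal _ (hpS z)]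
    rw [hT, hS]
    exact integral_congr_ae (Filter.Eventually.of_forall fun z => (hkey z).symm)
  -- integrability rearrangements
  have intA : Integrable (fun ω => h (Z ω) * φ (Z ω)) μS := by
    have heq : (fun ω => h (Z ω) * φ (Z ω))
        = fun ω => h (Z ω) * x (Z ω) i * m (Z ω) - h (Z ω) * x (Z ω) i * mstar (Z ω) := by
      funext ω; simp only [hφ]; ring
    rw [heq]; exact (hint3 i).sub (hint4 i)
  have intB : Integrable (fun ω => hstar (Z ω) * φ (Z ω)) μS := by
    have heq : (fun ω => hstar (Z ω) * φ (Z ω))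
        = fun ω => hstar (Z ω) * x (Z ω) i * m (Z ω) - hstar (Z ω) * x (Z ω) i * mstar (Z ω) := by
      funext ω; simp only [hφ]; ring
    rw [heq]; exact (hint5 i).sub (hint6 i)
  -- first term
  have step1 : ∫ ω, h (Z ω) * x (Z ω) i * (m (Z ω) - Y ω) ∂μS
      = ∫ ω, h (Z ω) * φ (Z ω) ∂μS := by
    have heq : (fun ω => h (Z ω) * x (Z ω) i * (m (Z ω) - Y ω))
        = fun ω => h (Z ω) * x (Z ω) i * m (Z ω) - h (Z ω) * x (Z ω) i * Y ω := by
      funext ω; ring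
    rw [heq, integral_sub (hint3 i) (hint2 i)]
    have htow := htowerS (fun z => h z * x z i) (hint2 i) (hint4 i)
    rw [htow]
    rw [← integral_sub (hint3 i) (hint4 i)]
    refine integral_congr_ae (Filter.Eventually.of_forall fun ω => ?_)
    simp only [hφ]; ring
  -- second term
  have step2 : ∫ ω, x (Z ω) i * (m (Z ω) - g (∑ j, x (Z ω) j * βbar j)) ∂μT
      = ∫ ω, φ (Z ω) ∂μT := by
    have heq : (fun ω => x (Z ω) i * (m (Z ω) - g (∑ j, x (Z ω) j * βbar j)))
        = fun ω => x (Z ω) i * m (Z ω) - x (Z ω) i * g (∑ j, x (Z ω) j * βbar j) := by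
      funext ω; ring
    rw [heq, integral_sub (hint8 i) (hint10 i)]
    have hg_eq : ∫ ω, x (Z ω) i * g (∑ j, x (Z ω) j * βbar j) ∂μT
        = ∫ ω, x (Z ω) i * Y ω ∂μT := by
      have hb := hbbar i
      have heq2 : (fun ω => x (Z ω) i * (Y ω - g (∑ j, x (Z ω) j * βbar j)))
          = fun ω => x (Z ω) i * Y ω - x (Z ω) i * g (∑ j, x (Z ω) j * βbar j) := by
        funext ω; ring
      rw [heq2, integral_sub (hint7 i) (hint10 i), sub_eq_zero] at hb
      exact hb.symm
    rw [hg_eq, htowerT (fun z => x z i) (hint7 i) (hint9 i)]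
    rw [← integral_sub (hint8 i) (hint9 i)]
    refine integral_congr_ae (Filter.Eventually.of_forall fun ω => ?_)
    simp only [hφ]; ring
  rw [step1, step2, transfer, ← integral_sub intA intB]
  refine integral_congr_ae (Filter.Eventually.of_forall fun ω => ?_)
  simp only [hφ]; ring
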